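/- For every m ≥ 0, the generating function of centrally symmetric permutations of even degree satisfies Φ_HT(2m; z) := ∑_{s ∈ S^HT_{2m}} z^{inv(s)} = [∏_{i=1}^{m} (1 + z^{2i-1})] · Φ(m; z²), where Φ(m; w) = ∑_{s ∈ S_m} w^{inv(s)}. -/

import Mathlib

def inversions {n : ℕ} (s : Equiv.Perm (Fin n)) : ℕ :=
  (Finset.univ.filter fun p : Fin n × Fin n => p.1 < p.2 ∧ s p.2 < s p.1).card

open Equiv Finset

lemma val_succAbove {n : ℕ} (k : Fin (n+1)) (i : Fin n) :
    (k.succAbove i : ℕ) = if (i : ℕ) < (k : ℕ) then (i : ℕ) else (i : ℕ) + 1 := by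
  rw [Fin.succAbove]
  split_ifs with h1 h2 h2 <;>
    simp_all [Fin.lt_def, Fin.coe_castSucc, Fin.val_succ] <;> omega

lemma succAbove_lt_succAbove {n : ℕ} (k : Fin (n+1)) {i j : Fin n} :
    k.succAbove i < k.succAbove j ↔ i < j := by
  simp only [Fin.lt_def, val_succAbove]
  split_ifs <;> omega

lemma lt_succAbove_iff' {n : ℕ} (k : Fin (n+1)) (j : Fin n) :
    k < k.succAbove j ↔ (k : ℕ) ≤ (j : ℕ) := by
  simp only [Fin.lt_def, val_succAbove]
  split_ifs <;> omega

lemma succAbove_lt_iff' {n : ℕ} (k : Fin (n+1)) (j : Fin n) :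
    k.succAbove j < k ↔ (j : ℕ) < (k : ℕ) := by
  simp only [Fin.lt_def, val_succAbove]
  split_ifs <;> omega

/-- insert max value at position k -/
def insf {n : ℕ} (k : Fin (n+1)) (σ : Perm (Fin n)) : Perm (Fin (n+1)) :=
  (finSuccEquiv' k).trans (σ.optionCongr.trans (finSuccEquiv' (Fin.last n)).symm)

/-- insert min value at position k -/
def insg {n : ℕ} (k : Fin (n+1)) (σ : Perm (Fin n)) : Perm (Fin (n+1)) :=
  (finSuccEquiv' k).trans (σ.optionCongr.trans (finSuccEquiv' 0).symm)

@[simp] lemma insf_self {n : ℕ} (k : Fin (n+1)) (σ : Perm (Fin n)) :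
    insf k σ k = Fin.last n := by
  simp [insf]

@[simp] lemma insf_succAbove {n : ℕ} (k : Fin (n+1)) (σ : Perm (Fin n)) (i : Fin n) :
    insf k σ (k.succAbove i) = (σ i).castSucc := by
  simp [insf, finSuccEquiv'_succAbove, Fin.succAbove_last]

@[simp] lemma insg_self {n : ℕ} (k : Fin (n+1)) (σ : Perm (Fin n)) :
    insg k σ k = 0 := by
  simp [insg]

@[simp] lemma insg_succAbove {n : ℕ} (k : Fin (n+1)) (σ : Perm (Fin n)) (i : Fin n) :
    insg k σ (k.succAbove i) = (σ i).succ := by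
  simp [insg, finSuccEquiv'_succAbove, Fin.succAbove_zero]

lemma inversions_eq_sum {n : ℕ} (s : Perm (Fin n)) :
    inversions s = ∑ p : Fin n × Fin n,
      (if p.1 < p.2 ∧ s p.2 < s p.1 then 1 else 0) :=
  card_filter _ _

lemma sum_indicator_le {n : ℕ} (k : ℕ) (hk : k ≤ n) :
    (∑ j : Fin n, if k ≤ (j : ℕ) then 1 else 0) = n - k := by
  have h := Fin.sum_univ_eq_sum_range (fun j => if k ≤ j then 1 else 0) n
  rw [h, ← card_filter]
  have : (Finset.range n).filter (fun j => k ≤ j) = Finset.Ico k n := by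
    ext j; simp [Finset.mem_filter, Finset.mem_Ico, and_comm]
  rw [this, Nat.card_Ico]

lemma sum_indicator_lt {n : ℕ} (k : ℕ) (hk : k ≤ n) :
    (∑ j : Fin n, if (j : ℕ) < k then 1 else 0) = k := by
  have h := Fin.sum_univ_eq_sum_range (fun j => if j < k then 1 else 0) n
  rw [h, ← card_filter]
  have : (Finset.range n).filter (fun j => j < k) = Finset.range k := by
    ext j; simp [Finset.mem_filter]; omega
  rw [this, Finset.card_range]

lemma inversions_insf {n : ℕ} (k : Fin (n+1)) (σ : Perm (Fin n)) :
    inversions (insf k σ) = (n - (k : ℕ)) + inversions σ := by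
  rw [inversions_eq_sum,
    ← Equiv.sum_comp (Equiv.prodCongr (finSuccEquiv' k).symm (finSuccEquiv' k).symm),
    Fintype.sum_prod_type, Fintype.sum_option]
  simp only [Fintype.sum_option, Equiv.prodCongr_apply, Prod.map_apply,
    finSuccEquiv'_symm_none, finSuccEquiv'_symm_some, insf_self, insf_succAbove,
    lt_irrefl, false_and, if_false, Fin.castSucc_lt_last, and_true]
  have h2 : ∀ i : Fin n, (if k.succAbove i < k ∧ Fin.last n < (σ i).castSucc then 1 else 0) = 0 := by
    intro i
    simp [Fin.not_lt.2 (Fin.le_last ((σ i).castSucc))]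
  simp only [h2, zero_add]
  have h3 : (∑ j : Fin n, if k < k.succAbove j then 1 else 0) = n - (k : ℕ) := by
    simp only [lt_succAbove_iff']
    exact sum_indicator_le _ (by omega)
  have h4 : ∀ i j : Fin n,
      (if k.succAbove i < k.succAbove j ∧ (σ j).castSucc < (σ i).castSucc then 1 else 0)
      = (if i < j ∧ σ j < σ i then 1 else 0) := by
    intro i j
    simp only [succAbove_lt_succAbove, Fin.castSucc_lt_castSucc_iff]
  have hσ : inversions σ = ∑ i : Fin n, ∑ j : Fin n, (if i < j ∧ σ j < σ i then 1 else 0) := by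
    rw [inversions_eq_sum, Fintype.sum_prod_type]
  simp only [h4, h3, hσ, Finset.sum_add_distrib, Finset.sum_const_zero, zero_add]

lemma inversions_insg {n : ℕ} (k : Fin (n+1)) (σ : Perm (Fin n)) :
    inversions (insg k σ) = (k : ℕ) + inversions σ := by
  rw [inversions_eq_sum,
    ← Equiv.sum_comp (Equiv.prodCongr (finSuccEquiv' k).symm (finSuccEquiv' k).symm),
    Fintype.sum_prod_type, Fintype.sum_option]
  simp only [Fintype.sum_option, Equiv.prodCongr_apply, Prod.map_apply,
    finSuccEquiv'_symm_none, finSuccEquiv'_symm_some, insg_self, insg_succAbove,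
    lt_irrefl, false_and, if_false]
  have h1 : ∀ j : Fin n, (if k < k.succAbove j ∧ (σ j).succ < 0 then 1 else 0) = 0 := by
    intro j; simp [Fin.not_lt.2 (Fin.zero_le ((σ j).succ))]
  have h2 : ∀ i : Fin n, (if k.succAbove i < k ∧ (0 : Fin (n+1)) < (σ i).succ then 1 else 0)
      = (if (i : ℕ) < (k : ℕ) then 1 else 0) := by
    intro i
    simp only [succAbove_lt_iff', Fin.succ_pos, and_true]
  have h4 : ∀ i j : Fin n,
      (if k.succAbove i < k.succAbove j ∧ (σ j).succ < (σ i).succ then 1 else 0)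
      = (if i < j ∧ σ j < σ i then 1 else 0) := by
    intro i j
    simp only [succAbove_lt_succAbove, Fin.succ_lt_succ_iff]
  have hσ : inversions σ = ∑ i : Fin n, ∑ j : Fin n, (if i < j ∧ σ j < σ i then 1 else 0) := by
    rw [inversions_eq_sum, Fintype.sum_prod_type]
  simp only [h1, h2, h4, zero_add, Finset.sum_add_distrib, Finset.sum_const_zero,
    sum_indicator_lt _ (Nat.lt_succ_iff.mp k.isLt), hσ]


lemma insf_ne_last {n : ℕ} (k : Fin (n+1)) (σ : Perm (Fin n)) (x : Fin (n+1)) (hx : x ≠ k) :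
    insf k σ x ≠ Fin.last n := by
  obtain ⟨i, rfl⟩ := Fin.exists_succAbove_eq (Ne.symm hx).symm
  rw [insf_succAbove]
  exact Fin.ne_of_lt (Fin.castSucc_lt_last _)

lemma insf_bijective {n : ℕ} :
    Function.Bijective (fun p : Fin (n+1) × Perm (Fin n) => insf p.1 p.2) := by
  rw [Fintype.bijective_iff_injective_and_card]
  constructor
  · rintro ⟨k, σ⟩ ⟨k', σ'⟩ h
    simp only [Prod.mk.injEq] at *
    have hk : k = k' := by
      by_contra hkk
      exact insf_ne_last k' σ' k hkk (by rw [← h]; exact insf_self k σ)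
    subst hk
    refine ⟨rfl, Equiv.ext fun i => ?_⟩
    have := DFunLike.congr_fun h (k.succAbove i)
    simp only [insf_succAbove] at this
    exact Fin.castSucc_injective _ this
  · simp [Fintype.card_perm, Nat.factorial_succ]

lemma perm_sum_rec {R : Type*} [CommRing R] (n : ℕ) (w : R) :
    (∑ s : Equiv.Perm (Fin (n+1)), w ^ inversions s) =
      (∑ j ∈ Finset.range (n+1), w ^ j) * ∑ σ : Equiv.Perm (Fin n), w ^ inversions σ := by
  rw [← Fintype.sum_bijective _ insf_bijective
      (fun p => w ^ ((n - (p.1 : ℕ)) + inversions p.2)) _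
      (fun p => by rw [inversions_insf])]
  rw [Fintype.sum_prod_type]
  simp only [pow_add]
  rw [← Finset.sum_mul_sum]
  congr 1
  rw [Fin.sum_univ_eq_sum_range (fun k => w ^ (n - k)) (n+1)]
  exact Finset.sum_range_reflect (fun j => w ^ j) (n+1)

def htPerms (n : ℕ) : Finset (Equiv.Perm (Fin n)) :=
  Finset.univ.filter fun s => ∀ i : Fin n, s i.rev = (s i).rev

lemma mem_htPerms {n : ℕ} (s : Perm (Fin n)) :
    s ∈ htPerms n ↔ ∀ i : Fin n, s i.rev = (s i).rev := by
  simp [htPerms]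

/-- position of `Fin.rev k` after removing position `k` -/
def pp {m : ℕ} (k : Fin (2*m+2)) : Fin (2*m+1) :=
  ⟨if (k : ℕ) ≤ m then 2*m - k else 2*m+1 - k, by split_ifs <;> omega⟩

lemma succAbove_pp {m : ℕ} (k : Fin (2*m+2)) : k.succAbove (pp k) = Fin.rev k := by
  have hk := k.isLt
  apply Fin.ext
  rw [val_succAbove, Fin.val_rev]
  simp only [pp]
  split_ifs <;> omega

def emb {m : ℕ} (k : Fin (2*m+2)) (i : Fin (2*m)) : Fin (2*m+2) :=
  k.succAbove ((pp k).succAbove i)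

lemma emb_rev {m : ℕ} (k : Fin (2*m+2)) (i : Fin (2*m)) :
    emb k i.rev = Fin.rev (emb k i) := by
  have hk := k.isLt
  have hi := i.isLt
  apply Fin.ext
  simp only [emb, val_succAbove, Fin.val_rev, pp]
  split_ifs <;> omega

lemma emb_ne_k {m : ℕ} (k : Fin (2*m+2)) (i : Fin (2*m)) : emb k i ≠ k :=
  Fin.succAbove_ne _ _

lemma emb_ne_revk {m : ℕ} (k : Fin (2*m+2)) (i : Fin (2*m)) : emb k i ≠ Fin.rev k := by
  rw [← succAbove_pp, emb]
  intro h
  exact Fin.succAbove_ne (pp k) i (Fin.succAbove_right_injective h)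

lemma emb_injective {m : ℕ} (k : Fin (2*m+2)) : Function.Injective (emb k) :=
  fun i j h => Fin.succAbove_right_injective (Fin.succAbove_right_injective h)

lemma cases3 {m : ℕ} (k : Fin (2*m+2)) (x : Fin (2*m+2)) :
    x = k ∨ x = Fin.rev k ∨ ∃ i, x = emb k i := by
  by_cases h1 : x = k
  · exact Or.inl h1
  obtain ⟨j, rfl⟩ := Fin.exists_succAbove_eq h1
  by_cases h2 : j = pp k
  · exact Or.inr (Or.inl (by rw [h2, succAbove_pp]))
  obtain ⟨i, rfl⟩ := Fin.exists_succAbove_eq h2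
  exact Or.inr (Or.inr ⟨i, rfl⟩)

/-- the insertion map for HT permutations -/
def Psi {m : ℕ} (k : Fin (2*m+2)) (σ : Perm (Fin (2*m))) : Perm (Fin (2*m+2)) :=
  insf k (insg (pp k) σ)

@[simp] lemma Psi_k {m : ℕ} (k : Fin (2*m+2)) (σ : Perm (Fin (2*m))) :
    Psi k σ k = Fin.last (2*m+1) := insf_self _ _

@[simp] lemma Psi_revk {m : ℕ} (k : Fin (2*m+2)) (σ : Perm (Fin (2*m))) :
    Psi k σ (Fin.rev k) = 0 := by
  rw [← succAbove_pp, Psi, insf_succAbove, insg_self]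
  rfl

@[simp] lemma Psi_emb {m : ℕ} (k : Fin (2*m+2)) (σ : Perm (Fin (2*m))) (i : Fin (2*m)) :
    Psi k σ (emb k i) = ((σ i).succ).castSucc := by
  rw [Psi, emb, insf_succAbove, insg_succAbove]

lemma rev_castSucc_succ {m : ℕ} (v : Fin (2*m)) :
    Fin.rev ((v.succ).castSucc) = ((v.rev).succ).castSucc := by
  apply Fin.ext
  have := v.isLt
  simp only [Fin.val_rev, Fin.coe_castSucc, Fin.val_succ]
  omega

lemma Psi_mem_htPerms {m : ℕ} (k : Fin (2*m+2)) (σ : Perm (Fin (2*m)))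
    (hσ : σ ∈ htPerms (2*m)) : Psi k σ ∈ htPerms (2*m+2) := by
  rw [mem_htPerms] at hσ ⊢
  intro x
  rcases cases3 k x with rfl | rfl | ⟨i, rfl⟩
  · rw [Psi_revk, Psi_k, Fin.rev_last]
  · rw [Fin.rev_rev, Psi_k, Psi_revk, Fin.rev_zero]
  · rw [← emb_rev, Psi_emb, Psi_emb, hσ i, rev_castSucc_succ]

lemma Psi_inversions {m : ℕ} (k : Fin (2*m+2)) (σ : Perm (Fin (2*m))) :
    inversions (Psi k σ) = ((2*m+1 - (k : ℕ)) + (pp k : ℕ)) + inversions σ := by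
  rw [Psi, inversions_insf, inversions_insg]; omega


lemma Psi_inj {m : ℕ} (k k' : Fin (2*m+2)) (σ σ' : Perm (Fin (2*m)))
    (h : Psi k σ = Psi k' σ') : k = k' ∧ σ = σ' := by
  have hk : k = k' := by
    by_contra hkk
    exact insf_ne_last k' (insg (pp k') σ') k hkk (by rw [← Psi, ← h, Psi_k])
  subst hk
  refine ⟨rfl, Equiv.ext fun i => ?_⟩
  have := DFunLike.congr_fun h (emb k i)
  rw [Psi_emb, Psi_emb] at this
  exact Fin.succ_injective _ (Fin.castSucc_injective _ this)

lemma Psi_surj {m : ℕ} (s : Perm (Fin (2*m+2))) (hs : s ∈ htPerms (2*m+2)) :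
    ∃ k σ, σ ∈ htPerms (2*m) ∧ Psi k σ = s := by
  rw [mem_htPerms] at hs
  set k := s.symm (Fin.last _) with hkdef
  have hk : s k = Fin.last _ := Equiv.apply_symm_apply s _
  have hrev : s (Fin.rev k) = 0 := by rw [hs k, hk, Fin.rev_last]
  have hne_last : ∀ i : Fin (2*m), (s (emb k i) : ℕ) ≠ 2*m+1 := by
    intro i h
    exact emb_ne_k k i (s.injective (by rw [hk]; exact Fin.ext h))
  have hne_zero : ∀ i : Fin (2*m), (s (emb k i) : ℕ) ≠ 0 := by
    intro i h
    exact emb_ne_revk k i (s.injective (by rw [hrev]; exact Fin.ext h))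
  have hlt : ∀ i, (s (emb k i) : ℕ) < 2*m+2 := fun i => (s (emb k i)).isLt
  set g : Fin (2*m) → Fin (2*m) := fun i =>
    ⟨(s (emb k i) : ℕ) - 1, by
      have h1 := hne_last i; have h2 := hne_zero i; have h3 := hlt i; omega⟩ with hg
  have ginj : Function.Injective g := by
    intro i j h
    have hv : ((g i : Fin (2*m)) : ℕ) = (g j : ℕ) := congrArg Fin.val h
    simp only [hg] at hv
    have h2i := hne_zero i; have h2j := hne_zero j
    exact emb_injective k (s.injective (Fin.ext (by omega)))
  set σ : Perm (Fin (2*m)) := Equiv.ofBijective g (Finite.injective_iff_bijective.mp ginj)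
    with hσ
  have happ : ∀ i, (σ i : ℕ) = (s (emb k i) : ℕ) - 1 := fun i => rfl
  refine ⟨k, σ, ?_, ?_⟩
  · rw [mem_htPerms]
    intro i
    apply Fin.ext
    rw [Fin.val_rev, happ, happ, emb_rev, hs, Fin.val_rev]
    have h2 := hne_zero i; have h3 := hlt i; have h4 := hne_last i
    omega
  · apply Equiv.ext
    intro x
    rcases cases3 k x with rfl | rfl | ⟨i, rfl⟩
    · rw [Psi_k, hk]
    · rw [Psi_revk, hrev]
    · rw [Psi_emb]
      apply Fin.ext
      rw [Fin.coe_castSucc, Fin.val_succ, happ]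
      have h2 := hne_zero i
      omega

lemma ht_rec {R : Type*} [CommRing R] (m : ℕ) (z : R) :
    (∑ s ∈ htPerms (2*m+2), z ^ inversions s) =
      ((1 + z ^ (2*m+1)) * ∑ j ∈ Finset.range (m+1), (z ^ 2) ^ j) *
        ∑ σ ∈ htPerms (2*m), z ^ inversions σ := by
  have key : ∑ p ∈ (Finset.univ ×ˢ htPerms (2*m) :
        Finset (Fin (2*m+2) × Perm (Fin (2*m)))),
      z ^ ((2*m+1 - (p.1 : ℕ)) + (pp p.1 : ℕ)) * z ^ inversions p.2
      = ∑ s ∈ htPerms (2*m+2), z ^ inversions s := by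
    apply Finset.sum_bij (fun p _ => Psi p.1 p.2)
    · rintro ⟨k, σ⟩ hp
      exact Psi_mem_htPerms k σ (by simpa using (Finset.mem_product.mp hp).2)
    · rintro ⟨k, σ⟩ _ ⟨k', σ'⟩ _ h
      obtain ⟨h1, h2⟩ := Psi_inj k k' σ σ' h
      simp [h1, h2]
    · intro s hs
      obtain ⟨k, σ, hσ, hps⟩ := Psi_surj s hs
      exact ⟨⟨k, σ⟩, Finset.mem_product.mpr ⟨Finset.mem_univ _, hσ⟩, hps⟩
    · rintro ⟨k, σ⟩ _
      rw [← pow_add, Psi_inversions]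
  rw [← key, Finset.sum_product]
  dsimp only
  rw [← Finset.sum_mul_sum]
  congr 1
  -- ∑ k : Fin (2m+2), z ^ c k = (1 + z^(2m+1)) * ∑ j ≤ m, (z²)^j
  have hval : ∀ k : Fin (2*m+2), ((2*m+1 - (k : ℕ)) + (pp k : ℕ))
      = (2*m+1 - (k : ℕ)) + (if (k : ℕ) ≤ m then 2*m - (k : ℕ) else 2*m+1 - (k : ℕ)) :=
    fun k => rfl
  simp only [hval]
  rw [Fin.sum_univ_eq_sum_range
    (fun j => z ^ ((2*m+1 - j) + (if j ≤ m then 2*m - j else 2*m+1 - j))) (2*m+2)]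
  have hsplit : ∑ j ∈ Finset.range (2*m+2),
      z ^ ((2*m+1 - j) + (if j ≤ m then 2*m - j else 2*m+1 - j))
      = ∑ j ∈ Finset.range (m+1), z ^ (2*m+1 + 2*(m - j))
        + ∑ j ∈ Finset.range (m+1), z ^ (2*(m - j)) := by
    have h1 : ∑ j ∈ Finset.range (2*m+2),
        z ^ ((2*m+1 - j) + (if j ≤ m then 2*m - j else 2*m+1 - j))
        = ∑ j ∈ Finset.range (m+1),
            z ^ ((2*m+1 - j) + (if j ≤ m then 2*m - j else 2*m+1 - j))
          + ∑ j ∈ Finset.Ico (m+1) (2*m+2),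
            z ^ ((2*m+1 - j) + (if j ≤ m then 2*m - j else 2*m+1 - j)) := by
      rw [Finset.range_eq_Ico,
        ← Finset.sum_Ico_consecutive _ (Nat.zero_le (m+1)) (by omega : m+1 ≤ 2*m+2),
        ← Finset.range_eq_Ico]
    rw [h1]
    congr 1
    · apply Finset.sum_congr rfl
      intro j hj
      rw [Finset.mem_range] at hj
      rw [if_pos (by omega)]
      congr 1
      omega
    · rw [Finset.sum_Ico_eq_sum_range, show 2*m+2 - (m+1) = m+1 from by omega]
      apply Finset.sum_congr rfl
      intro j hj
      rw [Finset.mem_range] at hj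
      rw [if_neg (by omega)]
      congr 1
      omega
  rw [hsplit]
  have hrefl : ∑ j ∈ Finset.range (m+1), z ^ (2*(m - j))
      = ∑ j ∈ Finset.range (m+1), (z ^ 2) ^ j := by
    rw [← Finset.sum_range_reflect (fun j => (z^2)^j) (m+1)]
    apply Finset.sum_congr rfl
    intro j hj
    rw [Finset.mem_range] at hj
    rw [← pow_mul]
    congr 1 <;> omega
  have hrefl2 : ∑ j ∈ Finset.range (m+1), z ^ (2*m+1 + 2*(m - j))
      = z ^ (2*m+1) * ∑ j ∈ Finset.range (m+1), z ^ (2*(m - j)) := by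
    rw [Finset.mul_sum]
    exact Finset.sum_congr rfl fun j _ => pow_add z (2*m+1) (2*(m-j))
  rw [hrefl2, hrefl]
  ring


theorem stmt7 {R : Type*} [CommRing R] (m : ℕ) (z : R) :
    (∑ s ∈ htPerms (2 * m), z ^ inversions s) =
      (∏ i ∈ Finset.range m, (1 + z ^ (2 * i + 1))) *
        ∑ s : Equiv.Perm (Fin m), (z ^ 2) ^ inversions s := by
  induction m with
  | zero =>
    simp only [Nat.mul_zero, Finset.range_zero, Finset.prod_empty, one_mul]
    have h0 : htPerms 0 = Finset.univ := by
      ext s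
      simp only [mem_htPerms, Finset.mem_univ, iff_true]
      intro i
      exact i.elim0
    rw [h0]
    apply Finset.sum_congr rfl
    intro s _
    have hi : inversions s = 0 := by
      simp [inversions]
    rw [hi, pow_zero, pow_zero]
  | succ m ih =>
    show (∑ s ∈ htPerms (2*m+2), z ^ inversions s) = _
    rw [ht_rec m z, ih, Finset.prod_range_succ, perm_sum_rec m (z ^ 2)]
    ring
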